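/- In any directed weighted graph on n vertices with source s and sink t, the number of loose edges (vital edges that are not saturated in any maximum (s,t)-flow) is at most n − 2. -/
import Mathlib
set_option linter.unusedSectionVars false
set_option maxHeartbeats 1000000


open Finset

variable {V : Type*} [Fintype V] [DecidableEq V]

/-- capacity of the cut given by the source-side vertex set `C`:
total capacity of edges with tail in `C` and head outside `C`. -/
noncomputable def cutCap (E : Finset (V × V)) (w : V × V → ℝ) (C : Finset V) : ℝ :=
  ∑ e ∈ E.filter (fun e => e.1 ∈ C ∧ e.2 ∉ C), w e

/-- `C` is an (s,t)-cut. -/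
def IsCut (s t : V) (C : Finset V) : Prop := s ∈ C ∧ t ∉ C

/-- edge `e` is a contributing (outgoing) edge of the cut `C`. -/
def Contributes (e : V × V) (C : Finset V) : Prop := e.1 ∈ C ∧ e.2 ∉ C

/-- `f` is a feasible (s,t)-flow on edge set `E` with capacities `w`. -/
structure IsFlow (E : Finset (V × V)) (w : V × V → ℝ) (s t : V) (f : V × V → ℝ) : Prop where
  nonneg : ∀ e ∈ E, 0 ≤ f e
  le_cap : ∀ e ∈ E, f e ≤ w e
  support : ∀ e, e ∉ E → f e = 0
  conserve : ∀ v, v ≠ s → v ≠ t →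
    ∑ e ∈ E.filter (fun e => e.1 = v), f e = ∑ e ∈ E.filter (fun e => e.2 = v), f e

/-- value of an (s,t)-flow: the net flow out of `s`. -/
noncomputable def flowValue (E : Finset (V × V)) (s : V) (f : V × V → ℝ) : ℝ :=
  ∑ e ∈ E.filter (fun e => e.1 = s), f e - ∑ e ∈ E.filter (fun e => e.2 = s), f e

/-- `f` is a maximum (s,t)-flow. -/
def IsMaxFlow (E : Finset (V × V)) (w : V × V → ℝ) (s t : V) (f : V × V → ℝ) : Prop :=
  IsFlow E w s t f ∧ ∀ g, IsFlow E w s t g → flowValue E s g ≤ flowValue E s f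

/-- capacity of a minimum (s,t)-cut. -/
noncomputable def minCutCap (E : Finset (V × V)) (w : V × V → ℝ) (s t : V) : ℝ :=
  sInf {x | ∃ C : Finset V, IsCut s t C ∧ cutCap E w C = x}

/-- `e` is a vital edge: deleting it strictly decreases the min (s,t)-cut capacity. -/
def Vital (E : Finset (V × V)) (w : V × V → ℝ) (s t : V) (e : V × V) : Prop :=
  e ∈ E ∧ minCutCap (E.erase e) w s t < minCutCap E w s t

/-- `C` is a mincut for the edge `e`: a least-capacity (s,t)-cut in which `e` contributes. -/
def IsMincutFor (E : Finset (V × V)) (w : V × V → ℝ) (s t : V) (e : V × V)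
    (C : Finset V) : Prop :=
  IsCut s t C ∧ Contributes e C ∧
    ∀ C', IsCut s t C' → Contributes e C' → cutCap E w C ≤ cutCap E w C'

/-- total flow on edges leaving the cut `C`. -/
noncomputable def flowOut (E : Finset (V × V)) (f : V × V → ℝ) (C : Finset V) : ℝ :=
  ∑ e ∈ E.filter (fun e => e.1 ∈ C ∧ e.2 ∉ C), f e

/-- total flow on edges entering the cut `C`. -/
noncomputable def flowIn (E : Finset (V × V)) (f : V × V → ℝ) (C : Finset V) : ℝ :=
  ∑ e ∈ E.filter (fun e => e.1 ∉ C ∧ e.2 ∈ C), f e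

section Basic

variable (E : Finset (V × V)) (w : V × V → ℝ) (s t : V)

lemma cutCapSet_finite : {x | ∃ C : Finset V, IsCut s t C ∧ cutCap E w C = x}.Finite := by
  have : {x | ∃ C : Finset V, IsCut s t C ∧ cutCap E w C = x}
      ⊆ (cutCap E w) '' Set.univ := by
    rintro x ⟨C, _, rfl⟩; exact ⟨C, trivial, rfl⟩
  exact Set.Finite.subset (Set.Finite.image _ (Set.finite_univ)) this

lemma cutCapSet_nonempty (hst : s ≠ t) :
    {x | ∃ C : Finset V, IsCut s t C ∧ cutCap E w C = x}.Nonempty :=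
  ⟨cutCap E w {s}, {s}, ⟨mem_singleton_self s, by simp [hst.symm]⟩, rfl⟩

lemma minCutCap_le {C : Finset V} (hC : IsCut s t C) :
    minCutCap E w s t ≤ cutCap E w C :=
  csInf_le (Set.Finite.bddBelow (cutCapSet_finite E w s t)) ⟨C, hC, rfl⟩

lemma exists_minCut (hst : s ≠ t) :
    ∃ C : Finset V, IsCut s t C ∧ cutCap E w C = minCutCap E w s t := by
  have h := Set.Nonempty.csInf_mem (cutCapSet_nonempty E w s t hst) (cutCapSet_finite E w s t)
  exact h

end Basic

section WeakDuality

variable {E : Finset (V × V)} {w : V × V → ℝ} {s t : V} {f : V × V → ℝ} {C : Finset V}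

lemma sum_out_eq (f : V × V → ℝ) (C : Finset V) :
    ∑ v ∈ C, ∑ e ∈ E.filter (fun e => e.1 = v), f e
      = ∑ e ∈ E.filter (fun e => e.1 ∈ C), f e := by
  have h : ∀ v ∈ C, ∑ e ∈ E.filter (fun e => e.1 = v), f e
      = ∑ e ∈ E, if e.1 = v then f e else 0 := fun v _ => sum_filter _ _
  rw [Finset.sum_congr rfl h, Finset.sum_comm, sum_filter]
  refine Finset.sum_congr rfl fun e _ => ?_
  rw [Finset.sum_ite_eq C e.1 (fun _ => f e)]

lemma sum_in_eq (f : V × V → ℝ) (C : Finset V) :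
    ∑ v ∈ C, ∑ e ∈ E.filter (fun e => e.2 = v), f e
      = ∑ e ∈ E.filter (fun e => e.2 ∈ C), f e := by
  have h : ∀ v ∈ C, ∑ e ∈ E.filter (fun e => e.2 = v), f e
      = ∑ e ∈ E, if e.2 = v then f e else 0 := fun v _ => sum_filter _ _
  rw [Finset.sum_congr rfl h, Finset.sum_comm, sum_filter]
  refine Finset.sum_congr rfl fun e _ => ?_
  rw [Finset.sum_ite_eq C e.2 (fun _ => f e)]

lemma flowValue_eq_out_sub_in (hf : IsFlow E w s t f) (hC : IsCut s t C) :
    flowValue E s f = flowOut E f C - flowIn E f C := by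
  obtain ⟨hsC, htC⟩ := hC
  have key : ∑ v ∈ C, ((∑ e ∈ E.filter (fun e => e.1 = v), f e)
      - (∑ e ∈ E.filter (fun e => e.2 = v), f e)) = flowValue E s f := by
    rw [Finset.sum_eq_single s]
    · rfl
    · intro v hv hvs
      have hvt : v ≠ t := fun h => htC (h ▸ hv)
      rw [hf.conserve v hvs hvt, sub_self]
    · intro h; exact absurd hsC h
  rw [Finset.sum_sub_distrib, sum_out_eq, sum_in_eq] at key
  rw [← key]
  -- split both sums by membership of the other endpoint
  have h1 : ∑ e ∈ E.filter (fun e => e.1 ∈ C), f e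
      = (∑ e ∈ E.filter (fun e => e.1 ∈ C ∧ e.2 ∈ C), f e)
        + ∑ e ∈ E.filter (fun e => e.1 ∈ C ∧ e.2 ∉ C), f e := by
    rw [← Finset.sum_filter_add_sum_filter_not (E.filter (fun e => e.1 ∈ C))
      (fun e => e.2 ∈ C)]
    rw [Finset.filter_filter, Finset.filter_filter]
  have h2 : ∑ e ∈ E.filter (fun e => e.2 ∈ C), f e
      = (∑ e ∈ E.filter (fun e => e.1 ∈ C ∧ e.2 ∈ C), f e)
        + ∑ e ∈ E.filter (fun e => e.1 ∉ C ∧ e.2 ∈ C), f e := by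
    rw [← Finset.sum_filter_add_sum_filter_not (E.filter (fun e => e.2 ∈ C))
      (fun e => e.1 ∈ C)]
    rw [Finset.filter_filter, Finset.filter_filter]
    congr 1
    · apply Finset.sum_congr _ (fun _ _ => rfl)
      apply Finset.filter_congr; intro e _; simp [and_comm]
    · apply Finset.sum_congr _ (fun _ _ => rfl)
      apply Finset.filter_congr; intro e _; simp [and_comm]
  rw [h1, h2, flowOut, flowIn]; ring

lemma flowValue_le_cutCap (hf : IsFlow E w s t f) (hC : IsCut s t C) :
    flowValue E s f ≤ cutCap E w C := by
  rw [flowValue_eq_out_sub_in hf hC]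
  have h1 : flowOut E f C ≤ cutCap E w C := by
    apply Finset.sum_le_sum
    intro e he
    exact hf.le_cap e (Finset.mem_of_mem_filter e he)
  have h2 : 0 ≤ flowIn E f C := by
    apply Finset.sum_nonneg
    intro e he
    exact hf.nonneg e (Finset.mem_of_mem_filter e he)
  linarith

lemma flowValue_le_minCutCap (hst : s ≠ t) (hf : IsFlow E w s t f) :
    flowValue E s f ≤ minCutCap E w s t := by
  obtain ⟨C, hC, hcap⟩ := exists_minCut E w s t hst
  rw [← hcap]
  exact flowValue_le_cutCap hf hC

end WeakDuality

section Existence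

variable {E : Finset (V × V)} {w : V × V → ℝ} {s t : V}

lemma continuous_flowValue (E : Finset (V × V)) (s : V) :
    Continuous (fun f : (V × V) → ℝ => flowValue E s f) := by
  apply Continuous.sub <;> exact continuous_finset_sum _ (fun e _ => continuous_apply e)

lemma exists_maxFlow (hpos : ∀ e ∈ E, 0 < w e) : ∃ f, IsMaxFlow E w s t f := by
  classical
  set K : Set ((V × V) → ℝ) := {f | IsFlow E w s t f} with hK
  have h0 : (0 : (V × V) → ℝ) ∈ K := by
    refine ⟨fun e he => le_refl 0, fun e he => (hpos e he).le, fun e _ => rfl, ?_⟩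
    intro v _ _; simp
  have hKeq : K = ({f | ∀ e ∈ E, 0 ≤ f e} ∩ {f | ∀ e ∈ E, f e ≤ w e}
      ∩ {f | ∀ e, e ∉ E → f e = 0}
      ∩ {f | ∀ v, v ≠ s → v ≠ t →
          ∑ e ∈ E.filter (fun e => e.1 = v), f e = ∑ e ∈ E.filter (fun e => e.2 = v), f e}) := by
    ext f
    constructor
    · intro hf; exact ⟨⟨⟨hf.nonneg, hf.le_cap⟩, hf.support⟩, hf.conserve⟩
    · rintro ⟨⟨⟨a, b⟩, c⟩, d⟩; exact ⟨a, b, c, d⟩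
  have hclosed : IsClosed K := by
    rw [hKeq]
    refine IsClosed.inter (IsClosed.inter (IsClosed.inter ?_ ?_) ?_) ?_
    · have : {f : (V × V) → ℝ | ∀ e ∈ E, 0 ≤ f e} = ⋂ e ∈ E, {f | 0 ≤ f e} := by
        ext f; simp
      rw [this]
      exact isClosed_biInter fun e _ => isClosed_le continuous_const (continuous_apply e)
    · have : {f : (V × V) → ℝ | ∀ e ∈ E, f e ≤ w e} = ⋂ e ∈ E, {f | f e ≤ w e} := by
        ext f; simp
      rw [this]
      exact isClosed_biInter fun e _ => isClosed_le (continuous_apply e) continuous_const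
    · have : {f : (V × V) → ℝ | ∀ e, e ∉ E → f e = 0} = ⋂ (e) (_ : e ∉ E), {f | f e = 0} := by
        ext f; simp
      rw [this]
      exact isClosed_iInter fun e => isClosed_iInter fun _ =>
        isClosed_eq (continuous_apply e) continuous_const
    · have : {f : (V × V) → ℝ | ∀ v, v ≠ s → v ≠ t →
          ∑ e ∈ E.filter (fun e => e.1 = v), f e = ∑ e ∈ E.filter (fun e => e.2 = v), f e}
          = ⋂ (v) (_ : v ≠ s) (_ : v ≠ t),
            {f | ∑ e ∈ E.filter (fun e => e.1 = v), f e
              = ∑ e ∈ E.filter (fun e => e.2 = v), f e} := by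
        ext f; simp
      rw [this]
      exact isClosed_iInter fun v => isClosed_iInter fun _ => isClosed_iInter fun _ =>
        isClosed_eq (continuous_finset_sum _ fun e _ => continuous_apply e)
          (continuous_finset_sum _ fun e _ => continuous_apply e)
  have hsub : K ⊆ Set.pi Set.univ (fun e => Set.Icc (0 : ℝ) (max (w e) 0)) := by
    intro f hf e _
    by_cases he : e ∈ E
    · exact ⟨hf.nonneg e he, le_max_of_le_left (hf.le_cap e he)⟩
    · rw [hf.support e he]; exact ⟨le_refl _, le_max_right _ _⟩
  have hpi : IsCompact (Set.pi Set.univ (fun e : V × V => Set.Icc (0 : ℝ) (max (w e) 0))) :=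
    isCompact_univ_pi (fun e => isCompact_Icc)
  have hKc : IsCompact K := hpi.of_isClosed_subset hclosed hsub
  obtain ⟨f, hfK, hmax⟩ := hKc.exists_isMaxOn ⟨0, h0⟩
    ((continuous_flowValue E s).continuousOn)
  exact ⟨f, hfK, fun g hg => hmax hg⟩

end Existence

/-- residual step relation -/
def resStep (E : Finset (V × V)) (w : V × V → ℝ) (f : V × V → ℝ) (a b : V) : Prop :=
  ((a, b) ∈ E ∧ f (a, b) < w (a, b)) ∨ ((b, a) ∈ E ∧ 0 < f (b, a))

lemma reflTransGen_exists_seq {r : V → V → Prop} {a b : V} (h : Relation.ReflTransGen r a b) :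
    ∃ (m : ℕ) (x : ℕ → V), x 0 = a ∧ x m = b ∧ ∀ i, i < m → r (x i) (x (i + 1)) := by
  induction h with
  | refl => exact ⟨0, fun _ => a, rfl, rfl, fun i hi => absurd hi (Nat.not_lt_zero i)⟩
  | @tail b' c h1 h2 ih =>
    obtain ⟨m, x, hx0, hxm, hstep⟩ := ih
    refine ⟨m + 1, fun i => if i ≤ m then x i else c, by simp [hx0], by simp, ?_⟩
    intro i hi
    show r (if i ≤ m then x i else c) (if i + 1 ≤ m then x (i + 1) else c)
    rcases Nat.lt_or_ge i m with him | him
    · rw [if_pos him.le, if_pos (show i + 1 ≤ m from him)]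
      exact hstep i him
    · have him' : i = m := by omega
      subst him'
      rw [if_pos (le_refl i), if_neg (by omega : ¬ i + 1 ≤ i), hxm]
      exact h2

section Augment

variable {E : Finset (V × V)} {w : V × V → ℝ} {s t : V} {f : V × V → ℝ}

lemma augment (hf : IsFlow E w s t f) (hst : s ≠ t)
    (hreach : Relation.ReflTransGen (resStep E w f) s t) :
    ∃ g, IsFlow E w s t g ∧ flowValue E s f < flowValue E s g := by
  classical
  have hP : ∃ m : ℕ, ∃ x : ℕ → V, x 0 = s ∧ x m = t ∧
      ∀ i, i < m → resStep E w f (x i) (x (i + 1)) :=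
    reflTransGen_exists_seq hreach
  obtain ⟨x, hx0, hxk, hstep⟩ := Nat.find_spec hP
  set k := Nat.find hP with hkdef
  have hk1 : 1 ≤ k := by
    rcases Nat.eq_zero_or_pos k with h | h
    · rw [h] at hxk; exact absurd (hx0 ▸ hxk) hst
    · exact h
  -- minimality gives injectivity
  have hshort : ∀ i j, i < j → j ≤ k → x i = x j → False := by
    intro i j hij hjk hx
    rcases eq_or_lt_of_le hjk with heq | hjk'
    · subst heq
      exact Nat.find_min hP (show i < k from hij)
        ⟨x, hx0, hx.trans hxk, fun r hr => hstep r (by omega)⟩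
    · refine Nat.find_min hP (show k - (j - i) < k by omega)
        ⟨fun r => if r ≤ i then x r else x (r + (j - i)), ?_, ?_, ?_⟩
      · show (if 0 ≤ i then x 0 else _) = s
        rw [if_pos (Nat.zero_le i)]; exact hx0
      · show (if k - (j - i) ≤ i then x (k - (j - i)) else x (k - (j - i) + (j - i))) = t
        rw [if_neg (by omega : ¬ k - (j - i) ≤ i), (by omega : k - (j - i) + (j - i) = k)]
        exact hxk
      · intro r hr
        show resStep E w f (if r ≤ i then x r else x (r + (j - i)))
          (if r + 1 ≤ i then x (r + 1) else x (r + 1 + (j - i)))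
        rcases Nat.lt_trichotomy r i with h | h | h
        · rw [if_pos h.le, if_pos (by omega : r + 1 ≤ i)]
          exact hstep r (by omega)
        · rw [if_pos (le_of_eq h), if_neg (by omega : ¬ r + 1 ≤ i),
            (by omega : r + 1 + (j - i) = j + 1), h, hx]
          exact hstep j (by omega)
        · rw [if_neg (by omega : ¬ r ≤ i), if_neg (by omega : ¬ r + 1 ≤ i),
            (by omega : r + 1 + (j - i) = r + (j - i) + 1)]
          exact hstep (r + (j - i)) (by omega)
  have hxinj : ∀ i j, i ≤ k → j ≤ k → x i = x j → i = j := by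
    intro i j hi hj hx
    rcases Nat.lt_trichotomy i j with h | h | h
    · exact absurd hx (fun hx => hshort i j h hj hx)
    · exact h
    · exact absurd hx.symm (fun hx => hshort j i h hi hx)
  -- forward / backward structure
  set Fwd : ℕ → Prop := fun i => (x i, x (i + 1)) ∈ E ∧ f (x i, x (i + 1)) < w (x i, x (i + 1))
    with hFwddef
  set ed : ℕ → V × V := fun i => if Fwd i then (x i, x (i + 1)) else (x (i + 1), x i) with heddef
  set sg : ℕ → ℝ := fun i => if Fwd i then 1 else -1 with hsgdef
  set mar : ℕ → ℝ := fun i => if Fwd i then w (ed i) - f (ed i) else f (ed i) with hmardef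
  have edF : ∀ i, Fwd i → ed i = (x i, x (i + 1)) ∧ sg i = 1 ∧ mar i = w (ed i) - f (ed i) :=
    fun i h => ⟨if_pos h, if_pos h, if_pos h⟩
  have edB : ∀ i, ¬ Fwd i → ed i = (x (i + 1), x i) ∧ sg i = -1 ∧ mar i = f (ed i) :=
    fun i h => ⟨if_neg h, if_neg h, if_neg h⟩
  have hbwd : ∀ i, i < k → ¬ Fwd i → (x (i + 1), x i) ∈ E ∧ 0 < f (x (i + 1), x i) := by
    intro i hik hnf
    rcases hstep i hik with h | h
    · exact absurd h hnf
    · exact h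
  have hedE : ∀ i, i < k → ed i ∈ E := by
    intro i hik
    by_cases hFi : Fwd i
    · rw [(edF i hFi).1]; exact hFi.1
    · rw [(edB i hFi).1]; exact (hbwd i hik hFi).1
  have hmarpos : ∀ i, i < k → 0 < mar i := by
    intro i hik
    by_cases hFi : Fwd i
    · obtain ⟨h1, _, h3⟩ := edF i hFi
      rw [h3, h1]; linarith [hFi.2]
    · obtain ⟨h1, _, h3⟩ := edB i hFi
      rw [h3, h1]; exact (hbwd i hik hFi).2
  have hrne : (Finset.range k).Nonempty := ⟨0, mem_range.mpr (by omega)⟩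
  set ε : ℝ := (Finset.range k).inf' hrne mar with hεdef
  have hεpos : 0 < ε := by
    rw [hεdef, Finset.lt_inf'_iff]
    intro i hi
    exact hmarpos i (mem_range.mp hi)
  have hεle : ∀ i, i < k → ε ≤ mar i := fun i hi =>
    Finset.inf'_le mar (mem_range.mpr hi)
  -- edge uniqueness
  have hedinj : ∀ i j, i < k → j < k → ed i = ed j → i = j := by
    intro i j hik hjk he
    by_cases hFi : Fwd i <;> by_cases hFj : Fwd j
    · rw [(edF i hFi).1, (edF j hFj).1] at he
      exact hxinj i j (by omega) (by omega) (congrArg Prod.fst he)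
    · rw [(edF i hFi).1, (edB j hFj).1] at he
      have e1 := hxinj i (j + 1) (by omega) (by omega) (congrArg Prod.fst he)
      have e2 := hxinj (i + 1) j (by omega) (by omega) (congrArg Prod.snd he)
      omega
    · rw [(edB i hFi).1, (edF j hFj).1] at he
      have e1 := hxinj (i + 1) j (by omega) (by omega) (congrArg Prod.fst he)
      have e2 := hxinj i (j + 1) (by omega) (by omega) (congrArg Prod.snd he)
      omega
    · rw [(edB i hFi).1, (edB j hFj).1] at he
      have e1 := hxinj (i + 1) (j + 1) (by omega) (by omega) (congrArg Prod.fst he)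
      omega
  -- the perturbation
  set d : V × V → ℝ := fun a => ∑ i ∈ Finset.range k, if ed i = a then sg i * ε else 0
    with hddef
  set g : V × V → ℝ := fun a => f a + d a with hgdef
  have hga : ∀ a, g a = f a + d a := fun a => rfl
  have hda : ∀ a, d a = 0 ∨ ∃ i, i < k ∧ ed i = a ∧ d a = sg i * ε := by
    intro a
    by_cases hex : ∃ i ∈ Finset.range k, ed i = a
    · obtain ⟨i, hi, hia⟩ := hex
      right
      refine ⟨i, mem_range.mp hi, hia, ?_⟩
      show (∑ j ∈ Finset.range k, if ed j = a then sg j * ε else 0) = sg i * ε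
      rw [Finset.sum_eq_single i]
      · rw [if_pos hia]
      · intro j hj hji
        rw [if_neg]
        intro hja
        exact hji (hedinj j i (mem_range.mp hj) (mem_range.mp hi) (hja.trans hia.symm))
      · intro h; exact absurd hi h
    · left
      apply Finset.sum_eq_zero
      intro i hi
      rw [if_neg]
      intro hia
      exact hex ⟨i, hi, hia⟩
  -- bounds
  have hbounds : ∀ a ∈ E, 0 ≤ g a ∧ g a ≤ w a := by
    intro a ha
    rcases hda a with h0 | ⟨i, hik, hia, hval⟩
    · rw [hga, h0, add_zero]
      exact ⟨hf.nonneg a ha, hf.le_cap a ha⟩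
    · rw [hga, hval]
      by_cases hFi : Fwd i
      · obtain ⟨h1, h2, h3⟩ := edF i hFi
        have hm := hεle i hik
        rw [h3, hia] at hm
        have := hf.nonneg a ha
        rw [h2, one_mul]
        constructor
        · linarith
        · linarith
      · obtain ⟨h1, h2, h3⟩ := edB i hFi
        have hm := hεle i hik
        rw [h3, hia] at hm
        have := hf.le_cap a ha
        rw [h2]
        constructor
        · linarith
        · linarith
  have hsupp : ∀ a, a ∉ E → g a = 0 := by
    intro a ha
    rcases hda a with h0 | ⟨i, hik, hia, _⟩
    · rw [hga, h0, add_zero]; exact hf.support a ha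
    · exact absurd (hia ▸ hedE i hik) ha
  -- sums of d over out/in edges at a vertex
  have hsumfst : ∀ v : V, ∑ a ∈ E.filter (fun a => a.1 = v), d a
      = ∑ i ∈ Finset.range k, if (ed i).1 = v then sg i * ε else 0 := by
    intro v
    calc ∑ a ∈ E.filter (fun a => a.1 = v), d a
        = ∑ a ∈ E.filter (fun a => a.1 = v),
            ∑ i ∈ Finset.range k, if ed i = a then sg i * ε else 0 :=
          Finset.sum_congr rfl (fun a _ => rfl)
      _ = ∑ i ∈ Finset.range k,
            ∑ a ∈ E.filter (fun a => a.1 = v), if ed i = a then sg i * ε else 0 :=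
          Finset.sum_comm
      _ = ∑ i ∈ Finset.range k, if ed i ∈ E.filter (fun a => a.1 = v) then sg i * ε else 0 :=
          Finset.sum_congr rfl (fun i _ => Finset.sum_ite_eq _ (ed i) _)
      _ = ∑ i ∈ Finset.range k, if (ed i).1 = v then sg i * ε else 0 := by
          refine Finset.sum_congr rfl (fun i hi => ?_)
          have hiE := hedE i (mem_range.mp hi)
          simp [Finset.mem_filter, hiE]
  have hsumsnd : ∀ v : V, ∑ a ∈ E.filter (fun a => a.2 = v), d a
      = ∑ i ∈ Finset.range k, if (ed i).2 = v then sg i * ε else 0 := by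
    intro v
    calc ∑ a ∈ E.filter (fun a => a.2 = v), d a
        = ∑ a ∈ E.filter (fun a => a.2 = v),
            ∑ i ∈ Finset.range k, if ed i = a then sg i * ε else 0 :=
          Finset.sum_congr rfl (fun a _ => rfl)
      _ = ∑ i ∈ Finset.range k,
            ∑ a ∈ E.filter (fun a => a.2 = v), if ed i = a then sg i * ε else 0 :=
          Finset.sum_comm
      _ = ∑ i ∈ Finset.range k, if ed i ∈ E.filter (fun a => a.2 = v) then sg i * ε else 0 :=
          Finset.sum_congr rfl (fun i _ => Finset.sum_ite_eq _ (ed i) _)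
      _ = ∑ i ∈ Finset.range k, if (ed i).2 = v then sg i * ε else 0 := by
          refine Finset.sum_congr rfl (fun i hi => ?_)
          have hiE := hedE i (mem_range.mp hi)
          simp [Finset.mem_filter, hiE]
  have hdelta : ∀ v : V, (∑ a ∈ E.filter (fun a => a.1 = v), d a)
      - (∑ a ∈ E.filter (fun a => a.2 = v), d a)
      = (if x 0 = v then ε else 0) - (if x k = v then ε else 0) := by
    intro v
    rw [hsumfst v, hsumsnd v, ← Finset.sum_sub_distrib]
    have hterm : ∀ i ∈ Finset.range k,
        (if (ed i).1 = v then sg i * ε else 0) - (if (ed i).2 = v then sg i * ε else 0)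
        = (if x i = v then ε else 0) - (if x (i + 1) = v then ε else 0) := by
      intro i _
      by_cases hFi : Fwd i
      · obtain ⟨h1, h2, _⟩ := edF i hFi
        rw [h1, h2]
        by_cases ha : x i = v <;> by_cases hb : x (i + 1) = v <;>
          simp [ha, hb]
      · obtain ⟨h1, h2, _⟩ := edB i hFi
        rw [h1, h2]
        by_cases ha : x i = v <;> by_cases hb : x (i + 1) = v <;>
          simp [ha, hb]
    rw [Finset.sum_congr rfl hterm]
    exact Finset.sum_range_sub' (fun i => if x i = v then ε else 0) k
  -- assemble
  refine ⟨g, ⟨fun a ha => (hbounds a ha).1, fun a ha => (hbounds a ha).2, hsupp, ?_⟩, ?_⟩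
  · intro v hvs hvt
    have h1 : ∑ a ∈ E.filter (fun a => a.1 = v), g a
        = (∑ a ∈ E.filter (fun a => a.1 = v), f a) + ∑ a ∈ E.filter (fun a => a.1 = v), d a := by
      rw [← Finset.sum_add_distrib]
    have h2 : ∑ a ∈ E.filter (fun a => a.2 = v), g a
        = (∑ a ∈ E.filter (fun a => a.2 = v), f a) + ∑ a ∈ E.filter (fun a => a.2 = v), d a := by
      rw [← Finset.sum_add_distrib]
    have h3 := hdelta v
    rw [hx0, hxk] at h3
    rw [if_neg (fun h => hvs h.symm), if_neg (fun h => hvt h.symm), sub_zero] at h3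
    rw [h1, h2, hf.conserve v hvs hvt]
    linarith
  · have h1 : ∑ a ∈ E.filter (fun a => a.1 = s), g a
        = (∑ a ∈ E.filter (fun a => a.1 = s), f a) + ∑ a ∈ E.filter (fun a => a.1 = s), d a := by
      rw [← Finset.sum_add_distrib]
    have h2 : ∑ a ∈ E.filter (fun a => a.2 = s), g a
        = (∑ a ∈ E.filter (fun a => a.2 = s), f a) + ∑ a ∈ E.filter (fun a => a.2 = s), d a := by
      rw [← Finset.sum_add_distrib]
    have h3 := hdelta s
    rw [hx0, hxk] at h3
    rw [if_pos rfl, if_neg (fun h => hst h.symm), sub_zero] at h3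
    show flowValue E s f < flowValue E s g
    unfold flowValue
    rw [h1, h2]
    linarith

end Augment


section MFMC

variable {E : Finset (V × V)} {w : V × V → ℝ} {s t : V} {f : V × V → ℝ}

lemma maxFlow_value_eq (hst : s ≠ t) (hf : IsMaxFlow E w s t f) :
    flowValue E s f = minCutCap E w s t := by
  classical
  refine le_antisymm (flowValue_le_minCutCap hst hf.1) ?_
  by_cases hreach : Relation.ReflTransGen (resStep E w f) s t
  · obtain ⟨g, hg, hlt⟩ := augment hf.1 hst hreach
    exact absurd (hf.2 g hg) (not_le.mpr hlt)
  · set C : Finset V := univ.filter (fun v => Relation.ReflTransGen (resStep E w f) s v)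
      with hCdef
    have hmemC : ∀ v, v ∈ C ↔ Relation.ReflTransGen (resStep E w f) s v := by
      intro v; rw [hCdef, Finset.mem_filter]; simp
    have hCcut : IsCut s t C :=
      ⟨(hmemC s).mpr Relation.ReflTransGen.refl, fun h => hreach ((hmemC t).mp h)⟩
    have hout : flowOut E f C = cutCap E w C := by
      apply Finset.sum_congr rfl
      intro a ha
      obtain ⟨haE, ha1, ha2⟩ := Finset.mem_filter.mp ha
      by_contra hne
      have hlt : f a < w a := lt_of_le_of_ne (hf.1.le_cap a haE) hne
      have hstep : resStep E w f a.1 a.2 := Or.inl ⟨by rw [Prod.mk.eta]; exact haE,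
        by rw [Prod.mk.eta]; exact hlt⟩
      exact ha2 ((hmemC a.2).mpr (((hmemC a.1).mp ha1).tail hstep))
    have hin : flowIn E f C = 0 := by
      apply Finset.sum_eq_zero
      intro a ha
      obtain ⟨haE, ha1, ha2⟩ := Finset.mem_filter.mp ha
      by_contra hne
      have hpos0 : 0 < f a := lt_of_le_of_ne (hf.1.nonneg a haE) (Ne.symm hne)
      have hstep : resStep E w f a.2 a.1 := Or.inr ⟨by rw [Prod.mk.eta]; exact haE,
        by rw [Prod.mk.eta]; exact hpos0⟩
      exact ha1 ((hmemC a.1).mpr (((hmemC a.2).mp ha2).tail hstep))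
    rw [flowValue_eq_out_sub_in hf.1 hCcut, hout, hin, sub_zero]
    exact minCutCap_le E w s t hCcut

lemma erase_isFlow {e : V × V} (hf : IsFlow E w s t f) (he : f e = 0) :
    IsFlow (E.erase e) w s t f := by
  refine ⟨fun a ha => hf.nonneg a (Finset.mem_of_mem_erase ha),
    fun a ha => hf.le_cap a (Finset.mem_of_mem_erase ha), ?_, ?_⟩
  · intro a ha
    by_cases hae : a = e
    · rw [hae]; exact he
    · exact hf.support a (fun haE => ha (Finset.mem_erase.mpr ⟨hae, haE⟩))
  · intro v hvs hvt
    rw [Finset.filter_erase, Finset.filter_erase, Finset.sum_erase _ he,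
      Finset.sum_erase _ he]
    exact hf.conserve v hvs hvt

lemma erase_flowValue {e : V × V} (he : f e = 0) :
    flowValue (E.erase e) s f = flowValue E s f := by
  unfold flowValue
  rw [Finset.filter_erase, Finset.filter_erase, Finset.sum_erase _ he,
    Finset.sum_erase _ he]

lemma vital_pos {e : V × V} (hst : s ≠ t) (hmax : IsMaxFlow E w s t f)
    (hv : Vital E w s t e) : 0 < f e := by
  rcases (hmax.1.nonneg e hv.1).lt_or_eq with h | h
  · exact h
  · exfalso
    have hf' : IsFlow (E.erase e) w s t f := erase_isFlow hmax.1 h.symm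
    have h2 := flowValue_le_minCutCap hst hf'
    rw [erase_flowValue h.symm, maxFlow_value_eq hst hmax] at h2
    exact absurd h2 (not_le.mpr hv.2)

end MFMC

/-- the number of loose edges is at most `n - 2`. -/
theorem card_loose_edges_le (E : Finset (V × V)) (w : V × V → ℝ) (s t : V)
    (hst : s ≠ t) (hpos : ∀ e ∈ E, 0 < w e) (hn : 2 ≤ Fintype.card V) :
    Set.ncard {e : V × V | e ∈ E ∧ Vital E w s t e ∧
        ∀ f, IsMaxFlow E w s t f → f e < w e}
      ≤ Fintype.card V - 2 := by
  classical
  obtain ⟨fmax, hfmax⟩ := exists_maxFlow (E := E) (w := w) (s := s) (t := t) hpos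
  set Lf : Finset (V × V) :=
    E.filter (fun e => Vital E w s t e ∧ ∀ f, IsMaxFlow E w s t f → f e < w e) with hLfdef
  have hset : {e : V × V | e ∈ E ∧ Vital E w s t e ∧
      ∀ f, IsMaxFlow E w s t f → f e < w e} = ↑Lf := by
    ext e
    constructor
    · rintro ⟨h1, h2, h3⟩
      exact Finset.mem_coe.mpr (Finset.mem_filter.mpr ⟨h1, h2, h3⟩)
    · intro h
      obtain ⟨h1, h2, h3⟩ := Finset.mem_filter.mp (Finset.mem_coe.mp h)
      exact ⟨h1, h2, h3⟩
  rw [hset, Set.ncard_coe_finset]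
  have hLsub : Lf ⊆ E := Finset.filter_subset _ _
  have hkey : ∀ a ∈ Lf, 0 < fmax a ∧ fmax a < w a := by
    intro a ha
    obtain ⟨haE, hvit, hlo⟩ := Finset.mem_filter.mp ha
    exact ⟨vital_pos hst hfmax hvit, hlo fmax hfmax⟩
  -- the sum functional and its kernel (the zero-sum hyperplane)
  set l : (V → ℝ) →ₗ[ℝ] ℝ :=
    { toFun := fun x => ∑ v, x v
      map_add' := by intro x y; simp [Finset.sum_add_distrib]
      map_smul' := by intro c x; simp [Finset.mul_sum] } with hldef
  -- the vectors
  set vec : Option {a : V × V // a ∈ Lf} → (V → ℝ) := fun i =>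
    Option.elim i
      (fun v => (if v = s then (1 : ℝ) else 0) - (if v = t then 1 else 0))
      (fun a v => (if v = (a : V × V).1 then (1 : ℝ) else 0)
        - (if v = (a : V × V).2 then 1 else 0)) with hvecdef
  have hvnone : ∀ v, vec none v
      = (if v = s then (1 : ℝ) else 0) - (if v = t then 1 else 0) := fun _ => rfl
  have hvsome : ∀ (a : {a : V × V // a ∈ Lf}) v, vec (some a) v
      = (if v = (a : V × V).1 then (1 : ℝ) else 0)
        - (if v = (a : V × V).2 then 1 else 0) := fun _ _ => rfl
  have hsum1 : ∀ u : V, ∑ v, (if v = u then (1 : ℝ) else 0) = 1 := by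
    intro u
    rw [Finset.sum_ite_eq' Finset.univ u (fun _ => (1 : ℝ))]
    simp
  have hker : ∀ i, vec i ∈ LinearMap.ker l := by
    intro i
    rw [LinearMap.mem_ker]
    rcases i with _ | a
    · show (∑ v, ((if v = s then (1 : ℝ) else 0) - (if v = t then 1 else 0))) = 0
      rw [Finset.sum_sub_distrib, hsum1 s, hsum1 t, sub_self]
    · show (∑ v, ((if v = (a : V × V).1 then (1 : ℝ) else 0)
        - (if v = (a : V × V).2 then 1 else 0))) = 0
      rw [Finset.sum_sub_distrib, hsum1, hsum1, sub_self]
  -- linear independence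
  have hli : LinearIndependent ℝ vec := by
    rw [Fintype.linearIndependent_iff]
    intro c hc
    set cf : V × V → ℝ := fun a => if h : a ∈ Lf then c (some ⟨a, h⟩) else 0 with hcfdef
    have hcf0 : ∀ a, a ∉ Lf → cf a = 0 := fun a ha => dif_neg ha
    have hcfv : ∀ (a : {a : V × V // a ∈ Lf}), cf ↑a = c (some a) := by
      intro a
      show (if h : (a : V × V) ∈ Lf then c (some ⟨↑a, h⟩) else 0) = c (some a)
      rw [dif_pos a.2]
    -- the pointwise equation from the dependency
    have hpt : ∀ v : V, (∑ a ∈ Lf, (if a.1 = v then cf a else 0))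
        - (∑ a ∈ Lf, (if a.2 = v then cf a else 0))
        + (c none) * ((if v = s then (1 : ℝ) else 0) - (if v = t then 1 else 0)) = 0 := by
      intro v
      have h1 := congrFun hc v
      rw [Finset.sum_apply] at h1
      simp only [Pi.smul_apply, smul_eq_mul, Pi.zero_apply] at h1
      rw [Fintype.sum_option] at h1
      have h2 : ∑ a : {a : V × V // a ∈ Lf}, c (some a) * vec (some a) v
          = ∑ e ∈ Lf, cf e * ((if v = e.1 then (1 : ℝ) else 0) - (if v = e.2 then 1 else 0)) := by
        rw [← Finset.sum_coe_sort Lf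
          (fun e => cf e * ((if v = e.1 then (1 : ℝ) else 0) - (if v = e.2 then 1 else 0)))]
        refine Finset.sum_congr rfl (fun a _ => ?_)
        rw [hcfv a, hvsome a v]
      rw [h2] at h1
      have h3 : ∀ e : V × V,
          cf e * ((if v = e.1 then (1 : ℝ) else 0) - (if v = e.2 then 1 else 0))
          = (if e.1 = v then cf e else 0) - (if e.2 = v then cf e else 0) := by
        intro e
        by_cases h1' : v = e.1 <;> by_cases h2' : v = e.2
        · rw [if_pos h1', if_pos h2', if_pos h1'.symm, if_pos h2'.symm]; ring
        · rw [if_pos h1', if_neg h2', if_pos h1'.symm, if_neg (fun h => h2' h.symm)]; ring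
        · rw [if_neg h1', if_pos h2', if_neg (fun h => h1' h.symm), if_pos h2'.symm]; ring
        · rw [if_neg h1', if_neg h2', if_neg (fun h => h1' h.symm),
            if_neg (fun h => h2' h.symm)]; ring
      rw [Finset.sum_congr rfl (fun e _ => h3 e), Finset.sum_sub_distrib] at h1
      rw [hvnone v] at h1
      linarith
    -- transfer Lf-sums to E-filtered sums
    have hEf1 : ∀ v, ∑ a ∈ E.filter (fun a => a.1 = v), cf a
        = ∑ a ∈ Lf, (if a.1 = v then cf a else 0) := by
      intro v
      rw [Finset.sum_filter]
      exact (Finset.sum_subset hLsub (fun a _ haL => by rw [hcf0 a haL]; simp)).symm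
    have hEf2 : ∀ v, ∑ a ∈ E.filter (fun a => a.2 = v), cf a
        = ∑ a ∈ Lf, (if a.2 = v then cf a else 0) := by
      intro v
      rw [Finset.sum_filter]
      exact (Finset.sum_subset hLsub (fun a _ haL => by rw [hcf0 a haL]; simp)).symm
    -- the perturbed flows
    have hflow : ∀ ε : ℝ,
        (∀ a ∈ Lf, 0 ≤ fmax a + ε * cf a ∧ fmax a + ε * cf a ≤ w a) →
        IsFlow E w s t (fun a => fmax a + ε * cf a) ∧
        flowValue E s (fun a => fmax a + ε * cf a) = flowValue E s fmax - ε * c none := by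
      intro ε hfeas
      have hv1 : ∀ v, (∑ a ∈ E.filter (fun a => a.1 = v), (fmax a + ε * cf a))
          = (∑ a ∈ E.filter (fun a => a.1 = v), fmax a)
            + ε * ∑ a ∈ Lf, (if a.1 = v then cf a else 0) := by
        intro v
        rw [Finset.sum_add_distrib, ← Finset.mul_sum, hEf1 v]
      have hv2 : ∀ v, (∑ a ∈ E.filter (fun a => a.2 = v), (fmax a + ε * cf a))
          = (∑ a ∈ E.filter (fun a => a.2 = v), fmax a)
            + ε * ∑ a ∈ Lf, (if a.2 = v then cf a else 0) := by
        intro v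
        rw [Finset.sum_add_distrib, ← Finset.mul_sum, hEf2 v]
      constructor
      · refine ⟨?_, ?_, ?_, ?_⟩
        · intro a ha
          by_cases haL : a ∈ Lf
          · exact (hfeas a haL).1
          · rw [hcf0 a haL, mul_zero, add_zero]; exact hfmax.1.nonneg a ha
        · intro a ha
          by_cases haL : a ∈ Lf
          · exact (hfeas a haL).2
          · rw [hcf0 a haL, mul_zero, add_zero]; exact hfmax.1.le_cap a ha
        · intro a ha
          rw [hcf0 a (fun haL => ha (hLsub haL)), mul_zero, add_zero]
          exact hfmax.1.support a ha
        · intro v hvs hvt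
          rw [hv1 v, hv2 v, hfmax.1.conserve v hvs hvt]
          have h9 := hpt v
          rw [if_neg hvs, if_neg hvt] at h9
          have h10 : (∑ a ∈ Lf, (if a.1 = v then cf a else 0))
              = (∑ a ∈ Lf, (if a.2 = v then cf a else 0)) := by linarith
          rw [h10]
      · show (∑ a ∈ E.filter (fun a => a.1 = s), (fmax a + ε * cf a))
            - (∑ a ∈ E.filter (fun a => a.2 = s), (fmax a + ε * cf a))
          = flowValue E s fmax - ε * c none
        rw [hv1 s, hv2 s]
        have h9 := hpt s
        rw [if_pos rfl, if_neg hst] at h9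
        have h10 : (∑ a ∈ Lf, (if a.1 = s then cf a else 0))
            = (∑ a ∈ Lf, (if a.2 = s then cf a else 0)) - c none := by linarith
        rw [h10]
        show _ = (∑ a ∈ E.filter (fun a => a.1 = s), fmax a)
          - (∑ a ∈ E.filter (fun a => a.2 = s), fmax a) - ε * c none
        ring
    -- step 1 : c none = 0
    have hcnone : c none = 0 := by
      by_contra hc0
      have hδex : ∀ a ∈ Lf, 0 < min (fmax a) (w a - fmax a) / (|cf a| + 1) := by
        intro a ha
        have hk := hkey a ha
        have habs : (0 : ℝ) < |cf a| + 1 := by positivity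
        exact div_pos (lt_min hk.1 (by linarith [hk.2])) habs
      set δ : ℝ := if hne : Lf.Nonempty then
          Lf.inf' hne (fun a => min (fmax a) (w a - fmax a) / (|cf a| + 1)) else 1 with hδdef
      have hδpos : 0 < δ := by
        rw [hδdef]
        split_ifs with hne
        · rw [Finset.lt_inf'_iff]; exact hδex
        · norm_num
      have hδle : ∀ a ∈ Lf, δ ≤ min (fmax a) (w a - fmax a) / (|cf a| + 1) := by
        intro a ha
        rw [hδdef, dif_pos ⟨a, ha⟩]
        exact Finset.inf'_le _ ha
      have hfeas : ∀ ε : ℝ, |ε| ≤ δ →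
          ∀ a ∈ Lf, 0 ≤ fmax a + ε * cf a ∧ fmax a + ε * cf a ≤ w a := by
        intro ε hε a ha
        have h1 := hδle a ha
        have hk := hkey a ha
        have habs : |ε * cf a| ≤ min (fmax a) (w a - fmax a) := by
          rw [abs_mul]
          calc |ε| * |cf a| ≤ δ * (|cf a| + 1) := by
                apply mul_le_mul hε (by linarith) (abs_nonneg _) hδpos.le
            _ ≤ (min (fmax a) (w a - fmax a) / (|cf a| + 1)) * (|cf a| + 1) := by
                apply mul_le_mul_of_nonneg_right h1 (by positivity)
            _ = min (fmax a) (w a - fmax a) := div_mul_cancel₀ _ (by positivity)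
        have h3 := abs_le.mp habs
        have h4 : min (fmax a) (w a - fmax a) ≤ fmax a := min_le_left _ _
        have h5 : min (fmax a) (w a - fmax a) ≤ w a - fmax a := min_le_right _ _
        constructor
        · linarith [h3.1]
        · linarith [h3.2]
      set q : ℝ := δ / (|c none| + 1) with hqdef
      have hqpos : 0 < q := by rw [hqdef]; positivity
      set ε : ℝ := -(c none) * q with hεdef
      have hεabs : |ε| ≤ δ := by
        have h1 : |ε| = |c none| * q := by
          rw [hεdef, abs_mul, abs_neg, abs_of_pos hqpos]
        have h2 : |c none| * (δ / (|c none| + 1)) = (|c none| * δ) / (|c none| + 1) := by ring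
        rw [h1, hqdef, h2, div_le_iff₀ (by positivity : (0:ℝ) < |c none| + 1)]
        nlinarith [abs_nonneg (c none), hδpos]
      obtain ⟨hIsFlow, hvalue⟩ := hflow ε (hfeas ε hεabs)
      have hgain : 0 < -(ε * c none) := by
        have h7 : 0 < c none * c none := mul_self_pos.mpr hc0
        rw [hεdef]
        nlinarith
      have h8 := hfmax.2 _ hIsFlow
      rw [hvalue] at h8
      linarith
    -- step 2 : each coefficient is 0
    intro i
    rcases i with _ | a
    · exact hcnone
    · by_contra hca
      have hcfa : cf ↑a ≠ 0 := by rw [hcfv a]; exact hca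
      set T : Finset (V × V) := Lf.filter (fun e => cf e ≠ 0) with hTdef
      have hTne : T.Nonempty := ⟨↑a, Finset.mem_filter.mpr ⟨a.2, hcfa⟩⟩
      set ρ : V × V → ℝ := fun e =>
        if 0 < cf e then (w e - fmax e) / cf e else fmax e / (-cf e) with hρdef
      set ε : ℝ := T.inf' hTne ρ with hεdef
      have hρpos : ∀ e ∈ T, 0 < ρ e := by
        intro e he
        obtain ⟨heL, hcf⟩ := Finset.mem_filter.mp he
        have hk := hkey e heL
        show (0 : ℝ) < if 0 < cf e then (w e - fmax e) / cf e else fmax e / (-cf e)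
        split_ifs with h
        · exact div_pos (by linarith [hk.2]) h
        · have hneg : cf e < 0 := lt_of_le_of_ne (not_lt.mp h) hcf
          exact div_pos hk.1 (by linarith)
      have hεpos : 0 < ε := by
        rw [hεdef, Finset.lt_inf'_iff]; exact hρpos
      have hεle : ∀ e ∈ T, ε ≤ ρ e := fun e he => Finset.inf'_le _ he
      have hfeas2 : ∀ e ∈ Lf, 0 ≤ fmax e + ε * cf e ∧ fmax e + ε * cf e ≤ w e := by
        intro e he
        have hk := hkey e he
        by_cases hcf : cf e = 0
        · rw [hcf, mul_zero, add_zero]; exact ⟨hk.1.le, hk.2.le⟩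
        · have heT : e ∈ T := Finset.mem_filter.mpr ⟨he, hcf⟩
          have hle := hεle e heT
          rcases lt_or_gt_of_ne hcf with hneg | hpos2
          · have hρe : ρ e = fmax e / (-cf e) := by
              show (if 0 < cf e then (w e - fmax e) / cf e else fmax e / (-cf e)) = _
              rw [if_neg (by linarith)]
            rw [hρe] at hle
            have h7 : (fmax e / (-cf e)) * cf e = - fmax e := by
              rw [div_mul_eq_mul_div, div_neg, mul_div_assoc, div_self hcf, mul_one]
            have h8 : (fmax e / (-cf e)) * cf e ≤ ε * cf e :=
              mul_le_mul_of_nonpos_right hle hneg.le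
            rw [h7] at h8
            have h9 : 0 < ε * (-cf e) := mul_pos hεpos (neg_pos.mpr hneg)
            constructor
            · linarith
            · nlinarith [hk.2]
          · have hρe : ρ e = (w e - fmax e) / cf e := by
              show (if 0 < cf e then (w e - fmax e) / cf e else fmax e / (-cf e)) = _
              rw [if_pos hpos2]
            rw [hρe] at hle
            have h7 : ((w e - fmax e) / cf e) * cf e = w e - fmax e :=
              div_mul_cancel₀ _ (ne_of_gt hpos2)
            have h8 : ε * cf e ≤ ((w e - fmax e) / cf e) * cf e :=
              mul_le_mul_of_nonneg_right hle hpos2.le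
            have h9 : 0 < ε * cf e := mul_pos hεpos hpos2
            rw [h7] at h8
            constructor
            · linarith
            · linarith
      obtain ⟨hIsFlow, hvalue⟩ := hflow ε hfeas2
      have hmax2 : IsMaxFlow E w s t (fun e => fmax e + ε * cf e) := by
        refine ⟨hIsFlow, ?_⟩
        intro g hg
        rw [hvalue, hcnone, mul_zero, sub_zero]
        exact hfmax.2 g hg
      obtain ⟨e1, he1T, he1⟩ := Finset.exists_mem_eq_inf' hTne ρ
      rw [← hεdef] at he1
      obtain ⟨he1L, hcf1⟩ := Finset.mem_filter.mp he1T
      obtain ⟨he1E, hvit1, hlo1⟩ := Finset.mem_filter.mp he1L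
      rcases lt_or_gt_of_ne hcf1 with hneg | hpos2
      · have hρe : ρ e1 = fmax e1 / (-cf e1) := by
          show (if 0 < cf e1 then (w e1 - fmax e1) / cf e1 else fmax e1 / (-cf e1)) = _
          rw [if_neg (by linarith)]
        have h7 : (fmax e1 / (-cf e1)) * cf e1 = - fmax e1 := by
          rw [div_mul_eq_mul_div, div_neg, mul_div_assoc, div_self hcf1, mul_one]
        have htight : fmax e1 + ε * cf e1 = 0 := by
          rw [he1, hρe, h7]
          ring
        have hvp := vital_pos hst hmax2 hvit1
        have hvp' : 0 < fmax e1 + ε * cf e1 := hvp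
        linarith
      · have hρe : ρ e1 = (w e1 - fmax e1) / cf e1 := by
          show (if 0 < cf e1 then (w e1 - fmax e1) / cf e1 else fmax e1 / (-cf e1)) = _
          rw [if_pos hpos2]
        have h7 : ((w e1 - fmax e1) / cf e1) * cf e1 = w e1 - fmax e1 :=
          div_mul_cancel₀ _ (ne_of_gt hpos2)
        have htight : fmax e1 + ε * cf e1 = w e1 := by
          rw [he1, hρe, h7]
          ring
        have hlt := hlo1 _ hmax2
        have hlt' : fmax e1 + ε * cf e1 < w e1 := hlt
        linarith
  -- dimension count
  set vec' : Option {a : V × V // a ∈ Lf} → ↥(LinearMap.ker l) :=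
    fun i => ⟨vec i, hker i⟩ with hvec'def
  have hli' : LinearIndependent ℝ vec' := by
    apply LinearIndependent.of_comp (LinearMap.ker l).subtype
    exact hli
  have hcard := hli'.fintype_card_le_finrank
  rw [Fintype.card_option, Fintype.card_coe] at hcard
  have hsurj : Function.Surjective l := by
    intro r
    refine ⟨fun v => if v = s then r else 0, ?_⟩
    show (∑ v, if v = s then r else 0) = r
    rw [Finset.sum_ite_eq' Finset.univ s (fun _ => r)]
    simp
  have hrn := LinearMap.finrank_range_add_finrank_ker l
  rw [LinearMap.range_eq_top.mpr hsurj, finrank_top, Module.finrank_self,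
    Module.finrank_fintype_fun_eq_card] at hrn
  omega
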